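/- Suppose R̃ ≤ 0 and I is partial, and let F = (S_safe × A) \ I. Then: (1) for every policy π, Ṽ*(d_0) ≥ J̃^π_+ := (1/(1−γ))·E_{(s,a)∼d̃^π}[r(s,a)·1{(s,a) ∈ F}], where Ṽ*(d_0) = max_π Ṽ^π(d_0) is the optimal value of M̃; (2) there exists an optimal policy π̃* of M̃ with E_{(s,a)∼d̃^{π̃*}}[1{(s,a) ∈ I}] = 0; and (3) if moreover R̃ < 0, then every optimal policy π̃* of M̃ satisfies E_{(s,a)∼d̃^{π̃*}}[1{(s,a) ∈ I}] = 0. -/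

import Mathlib

open scoped BigOperators Classical

noncomputable section

namespace SafeRL

variable {S A : Type*} [Fintype S] [Fintype A] [Nonempty A]

/-- `d` is a probability distribution on the finite type `S`. -/
def IsDist (d : S → ℝ) : Prop := (∀ s, 0 ≤ d s) ∧ ∑ s, d s = 1

/-- `P` is a transition kernel. -/
def IsKernel (P : S → A → S → ℝ) : Prop := ∀ s a, IsDist (P s a)

/-- `π` is a (Markov stationary stochastic) policy. -/
def IsPolicy (π : S → A → ℝ) : Prop := ∀ s, (∀ a, 0 ≤ π s a) ∧ ∑ a, π s a = 1

/-- Point mass at `s`. -/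
def pureDist (s : S) : S → ℝ := fun s' => if s' = s then 1 else 0

/-- One-step state-distribution update under policy `π`. -/
def step (P : S → A → S → ℝ) (π : S → A → ℝ) (d : S → ℝ) : S → ℝ :=
  fun s' => ∑ s, ∑ a, d s * π s a * P s a s'

/-- State distribution at time `t` when running `π` from `d0`. -/
def distAt (P : S → A → S → ℝ) (π : S → A → ℝ) (d0 : S → ℝ) (t : ℕ) : S → ℝ :=
  (step P π)^[t] d0

/-- Expected discounted return `V^π(d0)` of policy `π` from initial distribution `d0`. -/
def value (P : S → A → S → ℝ) (π : S → A → ℝ) (r : S → A → ℝ) (γ : ℝ) (d0 : S → ℝ) : ℝ :=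
  ∑' t : ℕ, γ ^ t * ∑ s, ∑ a, distAt P π d0 t s * π s a * r s a

/-- State value function `V^π(s)`. -/
def vf (P : S → A → S → ℝ) (π : S → A → ℝ) (r : S → A → ℝ) (γ : ℝ) (s : S) : ℝ :=
  value P π r γ (pureDist s)

/-- State-action value function `Q^π(s,a)`. -/
def qf (P : S → A → S → ℝ) (π : S → A → ℝ) (r : S → A → ℝ) (γ : ℝ) (s : S) (a : A) : ℝ :=
  r s a + γ * ∑ s', P s a s' * vf P π r γ s'

/-- The cost function `c(s,a) = 1{s = s_▷}` of the cost-based MDP. -/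
def cost (sbad : S) : S → A → ℝ := fun s _ => if s = sbad then 1 else 0

/-- Discounted state distribution `d^π(s)`. -/
def dsd (P : S → A → S → ℝ) (π : S → A → ℝ) (γ : ℝ) (d0 : S → ℝ) (s : S) : ℝ :=
  (1 - γ) * ∑' t : ℕ, γ ^ t * distAt P π d0 t s

/-- Discounted state-action distribution `d^π(s,a)`. -/
def dsa (P : S → A → S → ℝ) (π : S → A → ℝ) (γ : ℝ) (d0 : S → ℝ) (s : S) (a : A) : ℝ :=
  (1 - γ) * ∑' t : ℕ, γ ^ t * distAt P π d0 t s * π s a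

/-- Probability of the `h`-step trajectory prefix `f` when running `π` from `d`. -/
def prefProb (P : S → A → S → ℝ) (π : S → A → ℝ) :
    (S → ℝ) → (h : ℕ) → (Fin h → S × A) → ℝ
  | _, 0, _ => 1
  | d, h + 1, f =>
      d (f 0).1 * π (f 0).1 (f 0).2 *
        prefProb P π (P (f 0).1 (f 0).2) h (fun i => f i.succ)

/-- Probability that the `h`-step trajectory prefix generated by `π` from `d0` satisfies `E`. -/
def eventProb (P : S → A → S → ℝ) (π : S → A → ℝ) (d0 : S → ℝ) (h : ℕ)
    (E : (Fin h → S × A) → Prop) : ℝ :=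
  ∑ f : Fin h → S × A, if E f then prefProb P π d0 h f else 0

/-- `Q̄(s,μ) = E_{a ∼ μ(·|s)} Q̄(s,a)`. -/
def Qpol (Qb : S → A → ℝ) (μ : S → A → ℝ) (s : S) : ℝ := ∑ a, μ s a * Qb s a

/-- Advantage-like function `Ā(s,a) = Q̄(s,a) − Q̄(s,μ)`. -/
def Abar (Qb : S → A → ℝ) (μ : S → A → ℝ) (s : S) (a : A) : ℝ := Qb s a - Qpol Qb μ s

/-- The intervention set `I = {(s,a) ∈ S_safe × A : Ā(s,a) > η}`. -/
def intSet (Qb : S → A → ℝ) (μ : S → A → ℝ) (η : ℝ) (sbad sabs : S) : Set (S × A) :=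
  {p | p.1 ≠ sbad ∧ p.1 ≠ sabs ∧ η < Abar Qb μ p.1 p.2}

/-- The shielded policy `π' = G(π)`. -/
def shield (π μ : S → A → ℝ) (I : Set (S × A)) (sbad sabs : S) : S → A → ℝ :=
  fun s a =>
    if s = sbad ∨ s = sabs then π s a
    else (if (s, a) ∈ I then 0 else π s a)
      + μ s a * (1 - ∑ a', if (s, a') ∈ I then π s a' else 0)

/-- `σ`-admissibility of the intervention rule `(Q̄, μ, η)` (the condition does not
involve `η`): on safe states, `Q̄ ∈ [0,γ]` and
`c(s,a) + γ E_{s'∼P(·|s,a)}[Q̄(s',μ)] ≤ Q̄(s,a) + σ`. -/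
def SigmaAdmissible (P : S → A → S → ℝ) (Qb : S → A → ℝ) (μ : S → A → ℝ)
    (γ σ : ℝ) (sbad sabs : S) : Prop :=
  ∀ s, s ≠ sbad → s ≠ sabs → ∀ a : A,
    (0 ≤ Qb s a ∧ Qb s a ≤ γ) ∧
    cost sbad s a + γ * ∑ s', P s a s' * Qpol Qb μ s' ≤ Qb s a + σ

/-- Transition kernel of the absorbing MDP `M̃`; `none` plays the role of `s_†`. -/
def Ptil (P : S → A → S → ℝ) (I : Set (S × A)) : Option S → A → Option S → ℝ :=
  fun s? a s'? =>
    match s? with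
    | none => if s'? = none then 1 else 0
    | some s =>
        if (s, a) ∈ I then (if s'? = none then 1 else 0)
        else
          match s'? with
          | none => 0
          | some s' => P s a s'

/-- Reward of the absorbing MDP `M̃` with penalty `Rt` on the intervention set. -/
def rtil (r : S → A → ℝ) (I : Set (S × A)) (Rt : ℝ) : Option S → A → ℝ :=
  fun s? a =>
    match s? with
    | none => 0
    | some s => if (s, a) ∈ I then Rt else r s a

/-- Extension of a policy on `S` to `S ∪ {s_†}`, uniform at `s_†`. -/
def extPol (π : S → A → ℝ) : Option S → A → ℝ :=
  fun s? a =>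
    match s? with
    | none => (Fintype.card A : ℝ)⁻¹
    | some s => π s a

/-- Extension of an initial distribution on `S` to `S ∪ {s_†}`. -/
def extDist (d0 : S → ℝ) : Option S → ℝ :=
  fun s? => match s? with | none => 0 | some s => d0 s

/-- `P_G(π)`: discounted probability that a trajectory of `π` in `M` visits `I`. -/
def PG (P : S → A → S → ℝ) (π : S → A → ℝ) (d0 : S → ℝ) (γ : ℝ)
    (I : Set (S × A)) : ℝ :=
  (1 - γ) * ∑' h : ℕ, γ ^ h * eventProb P π d0 h (fun f => ∃ i, f i ∈ I)

/-- The deterministic policy associated to a map `g : S → A`. -/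
def detPol (g : S → A) : S → A → ℝ := fun s a => if a = g s then 1 else 0

/-- Bellman optimality operator `T̄` of the cost-based MDP. -/
def Tbar (P : S → A → S → ℝ) (sbad : S) (γ : ℝ) (Q : S → A → ℝ) : S → A → ℝ :=
  fun s a =>
    cost sbad s a +
      γ * ∑ s', P s a s' * Finset.univ.inf' Finset.univ_nonempty (fun a' => Q s' a')

section Lemmas
set_option linter.unusedSectionVars false
variable {S A : Type*} [Fintype S] [Fintype A] [Nonempty A]

lemma isDist_nonneg {d : S → ℝ} (h : IsDist d) (s : S) : 0 ≤ d s := h.1 s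

lemma isDist_le_one {d : S → ℝ} (h : IsDist d) (s : S) : d s ≤ 1 := by
  have := Finset.single_le_sum (f := d) (fun i _ => h.1 i) (Finset.mem_univ s)
  simpa [h.2] using this

lemma isDist_step {P : S → A → S → ℝ} {π : S → A → ℝ} {d : S → ℝ}
    (hP : IsKernel P) (hπ : IsPolicy π) (hd : IsDist d) : IsDist (step P π d) := by
  constructor
  · intro s'
    apply Finset.sum_nonneg; intro s _
    apply Finset.sum_nonneg; intro a _
    have := hd.1 s; have := (hπ s).1 a; have := (hP s a).1 s'
    positivity
  · simp only [step]
    rw [Finset.sum_comm]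
    have : ∀ s ∈ Finset.univ, (∑ s' : S, ∑ a : A, d s * π s a * P s a s') = d s := by
      intro s _
      rw [Finset.sum_comm]
      have : ∀ a ∈ Finset.univ, (∑ s' : S, d s * π s a * P s a s') = d s * π s a := by
        intro a _
        rw [← Finset.mul_sum, (hP s a).2, mul_one]
      rw [Finset.sum_congr rfl this, ← Finset.mul_sum, (hπ s).2, mul_one]
    rw [Finset.sum_congr rfl this, hd.2]

lemma isDist_distAt {P : S → A → S → ℝ} {π : S → A → ℝ} {d0 : S → ℝ}
    (hP : IsKernel P) (hπ : IsPolicy π) (hd : IsDist d0) (t : ℕ) :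
    IsDist (distAt P π d0 t) := by
  induction t with
  | zero => exact hd
  | succ n ih =>
      rw [distAt, Function.iterate_succ_apply']
      exact isDist_step hP hπ ih

/-- inner one-step expected reward -/
def bterm (P : S → A → S → ℝ) (π : S → A → ℝ) (r : S → A → ℝ) (d0 : S → ℝ) (t : ℕ) : ℝ :=
  ∑ s, ∑ a, distAt P π d0 t s * π s a * r s a

lemma value_eq_tsum_bterm (P : S → A → S → ℝ) (π : S → A → ℝ) (r : S → A → ℝ) (γ : ℝ)
    (d0 : S → ℝ) : value P π r γ d0 = ∑' t : ℕ, γ ^ t * bterm P π r d0 t := rfl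

lemma abs_bterm_le {P : S → A → S → ℝ} {π : S → A → ℝ} {r : S → A → ℝ} {d0 : S → ℝ}
    (hP : IsKernel P) (hπ : IsPolicy π) (hd : IsDist d0) {C : ℝ}
    (hr : ∀ s a, |r s a| ≤ C) (t : ℕ) : |bterm P π r d0 t| ≤ C := by
  have hdt := isDist_distAt hP hπ hd t
  calc |bterm P π r d0 t| ≤ ∑ s, |∑ a, distAt P π d0 t s * π s a * r s a| :=
        Finset.abs_sum_le_sum_abs _ _
    _ ≤ ∑ s, ∑ a, |distAt P π d0 t s * π s a * r s a| := by
        apply Finset.sum_le_sum; intro s _; exact Finset.abs_sum_le_sum_abs _ _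
    _ ≤ ∑ s, ∑ a, distAt P π d0 t s * π s a * C := by
        apply Finset.sum_le_sum; intro s _
        apply Finset.sum_le_sum; intro a _
        rw [abs_mul, abs_mul, abs_of_nonneg (hdt.1 s), abs_of_nonneg ((hπ s).1 a)]
        have h1 : 0 ≤ distAt P π d0 t s * π s a := mul_nonneg (hdt.1 s) ((hπ s).1 a)
        exact mul_le_mul_of_nonneg_left (hr s a) h1
    _ = C := by
        have : ∀ s ∈ Finset.univ, (∑ a, distAt P π d0 t s * π s a * C)
            = distAt P π d0 t s * C := by
          intro s _
          rw [← Finset.sum_mul, ← Finset.mul_sum, (hπ s).2, mul_one]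
        rw [Finset.sum_congr rfl this, ← Finset.sum_mul, hdt.2, one_mul]

lemma summable_geom_mul {γ : ℝ} (hγ0 : 0 ≤ γ) (hγ1 : γ < 1) {f : ℕ → ℝ} {C : ℝ}
    (hf : ∀ t, |f t| ≤ C * γ ^ t) : Summable f := by
  apply Summable.of_norm_bounded (g := fun t => C * γ ^ t)
  · exact (summable_geometric_of_lt_one hγ0 hγ1).mul_left C
  · intro t; simpa using hf t

lemma summable_value {P : S → A → S → ℝ} {π : S → A → ℝ} {r : S → A → ℝ} {γ : ℝ}
    {d0 : S → ℝ} (hP : IsKernel P) (hπ : IsPolicy π) (hd : IsDist d0)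
    (hγ0 : 0 ≤ γ) (hγ1 : γ < 1) {C : ℝ} (hr : ∀ s a, |r s a| ≤ C) :
    Summable (fun t => γ ^ t * bterm P π r d0 t) := by
  apply summable_geom_mul hγ0 hγ1 (C := C)
  intro t
  rw [abs_mul, abs_pow, abs_of_nonneg hγ0, mul_comm C (γ ^ t)]
  exact mul_le_mul_of_nonneg_left (abs_bterm_le hP hπ hd hr t) (by positivity)

end Lemmas
section Lemmas2
set_option linter.unusedSectionVars false
variable {S A : Type*} [Fintype S] [Fintype A] [Nonempty A]
variable {P : S → A → S → ℝ} {π : S → A → ℝ} {r : S → A → ℝ} {γ : ℝ} {d0 : S → ℝ}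

lemma summable_inner (hP : IsKernel P) (hπ : IsPolicy π) (hd : IsDist d0)
    (hγ0 : 0 ≤ γ) (hγ1 : γ < 1) (s : S) (a : A) :
    Summable (fun t => γ ^ t * distAt P π d0 t s * π s a * r s a) := by
  apply summable_geom_mul hγ0 hγ1 (C := |π s a * r s a|)
  intro t
  have hdt := isDist_distAt hP hπ hd t
  have h1 : |distAt P π d0 t s| ≤ 1 := by
    rw [abs_of_nonneg (hdt.1 s)]; exact isDist_le_one hdt s
  calc |γ ^ t * distAt P π d0 t s * π s a * r s a|
      = γ ^ t * |distAt P π d0 t s| * |π s a * r s a| := by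
        rw [abs_mul, abs_mul, abs_mul, abs_pow, abs_of_nonneg hγ0, mul_assoc, ← abs_mul]
    _ ≤ γ ^ t * 1 * |π s a * r s a| := by
        apply mul_le_mul_of_nonneg_right _ (abs_nonneg _)
        exact mul_le_mul_of_nonneg_left h1 (by positivity)
    _ = |π s a * r s a| * γ ^ t := by ring

lemma dsa_nonneg (hP : IsKernel P) (hπ : IsPolicy π) (hd : IsDist d0)
    (hγ0 : 0 ≤ γ) (hγ1 : γ < 1) (s : S) (a : A) :
    0 ≤ dsa P π γ d0 s a := by
  apply mul_nonneg (by linarith)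
  apply tsum_nonneg
  intro t
  have hdt := isDist_distAt hP hπ hd t
  have h1 := hdt.1 s; have h2 := (hπ s).1 a
  positivity

lemma dsa_eq_zero (hγ1 : γ < 1) {s : S} {a : A} (h : π s a = 0) :
    dsa P π γ d0 s a = 0 := by
  simp [dsa, h]

lemma value_eq_dsa (hP : IsKernel P) (hπ : IsPolicy π) (hd : IsDist d0)
    (hγ0 : 0 ≤ γ) (hγ1 : γ < 1) :
    value P π r γ d0 = (1 - γ)⁻¹ * ∑ s, ∑ a, dsa P π γ d0 s a * r s a := by
  have hγ : (1 : ℝ) - γ ≠ 0 := by linarith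
  have key : ∀ s a, dsa P π γ d0 s a * r s a
      = (1 - γ) * ∑' t : ℕ, γ ^ t * distAt P π d0 t s * π s a * r s a := by
    intro s a
    rw [dsa, mul_assoc, ← tsum_mul_right]
  have h1 : ∀ s a, Summable (fun t => γ ^ t * distAt P π d0 t s * π s a * r s a) :=
    summable_inner hP hπ hd hγ0 hγ1
  have h2 : ∀ s, Summable (fun t => ∑ a, γ ^ t * distAt P π d0 t s * π s a * r s a) :=
    fun s => summable_sum (fun a _ => h1 s a)
  calc value P π r γ d0
      = ∑' t : ℕ, ∑ s, ∑ a, γ ^ t * distAt P π d0 t s * π s a * r s a := by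
        rw [value_eq_tsum_bterm]
        congr 1; funext t
        rw [bterm, Finset.mul_sum]
        congr 1; funext s
        rw [Finset.mul_sum]
        congr 1; funext a
        ring
    _ = ∑ s, ∑' t : ℕ, ∑ a, γ ^ t * distAt P π d0 t s * π s a * r s a :=
        Summable.tsum_finsetSum (fun s _ => h2 s)
    _ = ∑ s, ∑ a, ∑' t : ℕ, γ ^ t * distAt P π d0 t s * π s a * r s a := by
        apply Finset.sum_congr rfl; intro s _
        exact Summable.tsum_finsetSum (fun a _ => h1 s a)
    _ = (1 - γ)⁻¹ * ∑ s, ∑ a, dsa P π γ d0 s a * r s a := by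
        rw [Finset.mul_sum]
        apply Finset.sum_congr rfl; intro s _
        rw [Finset.mul_sum]
        apply Finset.sum_congr rfl; intro a _
        rw [key s a, ← mul_assoc, inv_mul_cancel₀ hγ, one_mul]

lemma value_nonneg (hP : IsKernel P) (hπ : IsPolicy π) (hd : IsDist d0)
    (hγ0 : 0 ≤ γ) (hγ1 : γ < 1) (hr : ∀ s a, 0 ≤ r s a) :
    0 ≤ value P π r γ d0 := by
  apply tsum_nonneg
  intro t
  have hdt := isDist_distAt hP hπ hd t
  apply mul_nonneg (by positivity)
  apply Finset.sum_nonneg; intro s _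
  apply Finset.sum_nonneg; intro a _
  have h1 := hdt.1 s; have h2 := (hπ s).1 a; have h3 := hr s a
  positivity

lemma value_le (hP : IsKernel P) (hπ : IsPolicy π) (hd : IsDist d0)
    (hγ0 : 0 ≤ γ) (hγ1 : γ < 1) {C : ℝ} (hC : 0 ≤ C) (hr : ∀ s a, |r s a| ≤ C) :
    value P π r γ d0 ≤ C * (1 - γ)⁻¹ := by
  have hsum := summable_value hP hπ hd hγ0 hγ1 hr
  have hle : ∀ t : ℕ, γ ^ t * bterm P π r d0 t ≤ C * γ ^ t := by
    intro t
    have := abs_bterm_le hP hπ hd hr t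
    have h2 : bterm P π r d0 t ≤ C := (abs_le.mp this).2
    calc γ ^ t * bterm P π r d0 t ≤ γ ^ t * C :=
          mul_le_mul_of_nonneg_left h2 (by positivity)
      _ = C * γ ^ t := mul_comm _ _
  calc value P π r γ d0 ≤ ∑' t : ℕ, C * γ ^ t :=
        Summable.tsum_le_tsum hle hsum ((summable_geometric_of_lt_one hγ0 hγ1).mul_left C)
    _ = C * (1 - γ)⁻¹ := by
        rw [tsum_mul_left, tsum_geometric_of_lt_one hγ0 hγ1]

end Lemmas2
section Lemmas3
set_option linter.unusedSectionVars false
variable {S A : Type*} [Fintype S] [Fintype A] [Nonempty A]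
variable {P : S → A → S → ℝ} {π : S → A → ℝ} {r : S → A → ℝ} {γ : ℝ} {d0 : S → ℝ}

lemma isDist_pure (s : S) : IsDist (pureDist s : S → ℝ) := by
  constructor
  · intro s'; unfold pureDist; split <;> norm_num
  · simp [pureDist]

lemma abs_r_bound (r : S → A → ℝ) (s : S) (a : A) :
    |r s a| ≤ ∑ s', ∑ a', |r s' a'| := by
  calc |r s a| ≤ ∑ a', |r s a'| :=
        Finset.single_le_sum (f := fun a' => |r s a'|) (fun i _ => abs_nonneg _)
          (Finset.mem_univ a)
    _ ≤ ∑ s', ∑ a', |r s' a'| :=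
        Finset.single_le_sum (f := fun s' => ∑ a', |r s' a'|)
          (fun i _ => Finset.sum_nonneg fun _ _ => abs_nonneg _) (Finset.mem_univ s)

lemma distAt_linear (t : ℕ) (s' : S) :
    distAt P π d0 t s' = ∑ s, d0 s * distAt P π (pureDist s) t s' := by
  induction t generalizing s' with
  | zero => simp [distAt, pureDist, mul_ite]
  | succ n ih =>
      rw [distAt, Function.iterate_succ_apply', ← distAt]
      show (∑ u, ∑ a, distAt P π d0 n u * π u a * P u a s') = _
      have step1 : ∀ u : S, (∑ a, distAt P π d0 n u * π u a * P u a s')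
          = ∑ s, ∑ a, d0 s * (distAt P π (pureDist s) n u * π u a * P u a s') := by
        intro u
        rw [Finset.sum_comm]
        apply Finset.sum_congr rfl; intro a _
        rw [ih u, Finset.sum_mul, Finset.sum_mul]
        apply Finset.sum_congr rfl; intro s _; ring
      rw [Finset.sum_congr rfl (fun u _ => step1 u), Finset.sum_comm]
      apply Finset.sum_congr rfl; intro s _
      conv_rhs => rw [distAt, Function.iterate_succ_apply']
      show _ = d0 s * (∑ u, ∑ a, distAt P π (pureDist s) n u * π u a * P u a s')
      rw [Finset.mul_sum]
      exact Finset.sum_congr rfl fun u _ => (Finset.mul_sum _ _ _).symm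

lemma bterm_linear (t : ℕ) :
    bterm P π r d0 t = ∑ s, d0 s * bterm P π r (pureDist s) t := by
  unfold bterm
  have key : ∀ s' : S, ∀ a, distAt P π d0 t s' * π s' a * r s' a
      = ∑ s, d0 s * (distAt P π (pureDist s) t s' * π s' a * r s' a) := by
    intro s' a
    rw [distAt_linear t s', Finset.sum_mul, Finset.sum_mul]
    apply Finset.sum_congr rfl; intro s _; ring
  calc (∑ s', ∑ a, distAt P π d0 t s' * π s' a * r s' a)
      = ∑ s', ∑ a, ∑ s, d0 s * (distAt P π (pureDist s) t s' * π s' a * r s' a) := by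
        apply Finset.sum_congr rfl; intro s' _
        exact Finset.sum_congr rfl fun a _ => key s' a
    _ = ∑ s', ∑ s, ∑ a, d0 s * (distAt P π (pureDist s) t s' * π s' a * r s' a) :=
        Finset.sum_congr rfl fun s' _ => Finset.sum_comm
    _ = ∑ s, ∑ s', ∑ a, d0 s * (distAt P π (pureDist s) t s' * π s' a * r s' a) :=
        Finset.sum_comm
    _ = ∑ s, d0 s * bterm P π r (pureDist s) t := by
        apply Finset.sum_congr rfl; intro s _
        rw [bterm, Finset.mul_sum]
        exact Finset.sum_congr rfl fun s' _ => (Finset.mul_sum _ _ _).symm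

lemma value_linear (hP : IsKernel P) (hπ : IsPolicy π)
    (hγ0 : 0 ≤ γ) (hγ1 : γ < 1) :
    value P π r γ d0 = ∑ s, d0 s * vf P π r γ s := by
  set C := ∑ s', ∑ a', |r s' a'| with hC
  have hrb : ∀ s a, |r s a| ≤ C := abs_r_bound r
  have hsum : ∀ s : S, Summable (fun t => d0 s * (γ ^ t * bterm P π r (pureDist s) t)) :=
    fun s => (summable_value hP hπ (isDist_pure s) hγ0 hγ1 hrb).mul_left (d0 s)
  calc value P π r γ d0
      = ∑' t : ℕ, ∑ s, d0 s * (γ ^ t * bterm P π r (pureDist s) t) := by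
        rw [value_eq_tsum_bterm]
        congr 1; funext t
        rw [bterm_linear t, Finset.mul_sum]
        exact Finset.sum_congr rfl fun s _ => by ring
    _ = ∑ s, ∑' t : ℕ, d0 s * (γ ^ t * bterm P π r (pureDist s) t) :=
        Summable.tsum_finsetSum (fun s _ => hsum s)
    _ = ∑ s, d0 s * vf P π r γ s := by
        apply Finset.sum_congr rfl; intro s _
        rw [tsum_mul_left, vf, value_eq_tsum_bterm]

end Lemmas3
section Lemmas4
set_option linter.unusedSectionVars false
variable {S A : Type*} [Fintype S] [Fintype A] [Nonempty A]
variable {P : S → A → S → ℝ} {π : S → A → ℝ} {r : S → A → ℝ} {γ : ℝ} {d0 : S → ℝ}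

lemma value_succ (hP : IsKernel P) (hπ : IsPolicy π) (hd : IsDist d0)
    (hγ0 : 0 ≤ γ) (hγ1 : γ < 1) :
    value P π r γ d0 = (∑ s, ∑ a, d0 s * π s a * r s a)
      + γ * value P π r γ (step P π d0) := by
  set C := ∑ s', ∑ a', |r s' a'| with hC
  have hrb : ∀ s a, |r s a| ≤ C := abs_r_bound r
  have hsum := summable_value hP hπ hd hγ0 hγ1 hrb
  rw [value_eq_tsum_bterm, Summable.tsum_eq_zero_add hsum]
  congr 1
  · show γ ^ 0 * bterm P π r d0 0 = _
    rw [pow_zero, one_mul, bterm]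
    rfl
  · have : ∀ t : ℕ, γ ^ (t + 1) * bterm P π r d0 (t + 1)
        = γ * (γ ^ t * bterm P π r (step P π d0) t) := by
      intro t
      have hb : bterm P π r d0 (t + 1) = bterm P π r (step P π d0) t := by
        unfold bterm
        apply Finset.sum_congr rfl; intro s _
        apply Finset.sum_congr rfl; intro a _
        have hd2 : distAt P π d0 (t+1) = distAt P π (step P π d0) t := by
          rw [distAt, distAt, Function.iterate_succ_apply]
        rw [hd2]
      rw [hb]; ring
    calc (∑' t : ℕ, γ ^ (t + 1) * bterm P π r d0 (t + 1))
        = ∑' t : ℕ, γ * (γ ^ t * bterm P π r (step P π d0) t) := by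
          congr 1; funext t; exact this t
      _ = γ * value P π r γ (step P π d0) := by
          rw [tsum_mul_left, value_eq_tsum_bterm]

lemma step_pure (s : S) (s' : S) :
    step P π (pureDist s) s' = ∑ a, π s a * P s a s' := by
  unfold step pureDist
  rw [Finset.sum_eq_single s]
  · apply Finset.sum_congr rfl; intro a _; simp
  · intro u _ hu
    apply Finset.sum_eq_zero; intro a _
    simp [hu]
  · intro h; exact absurd (Finset.mem_univ s) h

lemma vf_bellman (hP : IsKernel P) (hπ : IsPolicy π)
    (hγ0 : 0 ≤ γ) (hγ1 : γ < 1) (s : S) :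
    vf P π r γ s = ∑ a, π s a * (r s a + γ * ∑ s', P s a s' * vf P π r γ s') := by
  rw [vf, value_succ hP hπ (isDist_pure s) hγ0 hγ1]
  have h1 : (∑ u, ∑ a, pureDist s u * π u a * r u a) = ∑ a, π s a * r s a := by
    rw [Finset.sum_eq_single s]
    · apply Finset.sum_congr rfl; intro a _; simp [pureDist]
    · intro u _ hu; apply Finset.sum_eq_zero; intro a _; simp [pureDist, hu]
    · intro h; exact absurd (Finset.mem_univ s) h
  have h2 : value P π r γ (step P π (pureDist s))
      = ∑ s', (∑ a, π s a * P s a s') * vf P π r γ s' := by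
    rw [value_linear hP hπ hγ0 hγ1]
    apply Finset.sum_congr rfl; intro s' _
    rw [step_pure]
  rw [h1, h2]
  have h3 : γ * ∑ s', (∑ a, π s a * P s a s') * vf P π r γ s'
      = ∑ a, π s a * (γ * ∑ s', P s a s' * vf P π r γ s') := by
    rw [Finset.mul_sum]
    calc (∑ s', γ * ((∑ a, π s a * P s a s') * vf P π r γ s'))
        = ∑ s', ∑ a, π s a * (γ * (P s a s' * vf P π r γ s')) := by
          apply Finset.sum_congr rfl; intro s' _
          rw [Finset.sum_mul, Finset.mul_sum]
          apply Finset.sum_congr rfl; intro a _; ring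
      _ = ∑ a, ∑ s', π s a * (γ * (P s a s' * vf P π r γ s')) := Finset.sum_comm
      _ = ∑ a, π s a * (γ * ∑ s', P s a s' * vf P π r γ s') := by
          apply Finset.sum_congr rfl; intro a _
          rw [Finset.mul_sum, Finset.mul_sum]
  rw [h3, ← Finset.sum_add_distrib]
  apply Finset.sum_congr rfl; intro a _; ring

end Lemmas4
section Lemmas5
set_option linter.unusedSectionVars false
variable {S A : Type*} [Fintype S] [Fintype A] [Nonempty S] [Nonempty A]
variable {P : S → A → S → ℝ} {π : S → A → ℝ} {r : S → A → ℝ} {γ : ℝ}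

/-- state-action value given a state-value estimate -/
def QofV (P : S → A → S → ℝ) (r : S → A → ℝ) (γ : ℝ) (V : S → ℝ) (s : S) (a : A) : ℝ :=
  r s a + γ * ∑ s', P s a s' * V s'

lemma abs_sup'_sub_sup'_le {t : Finset A} (ht : t.Nonempty) (f g : A → ℝ) {c : ℝ}
    (h : ∀ a ∈ t, |f a - g a| ≤ c) : |t.sup' ht f - t.sup' ht g| ≤ c := by
  rw [abs_sub_le_iff]
  constructor
  · rw [sub_le_iff_le_add]
    apply Finset.sup'_le
    intro a ha
    have := (abs_le.mp (h a ha)).2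
    have h2 := Finset.le_sup' g ha
    linarith
  · rw [sub_le_iff_le_add]
    apply Finset.sup'_le
    intro a ha
    have := (abs_le.mp (h a ha)).1
    have h2 := Finset.le_sup' f ha
    linarith

lemma exists_fixed (hP : IsKernel P) (hγ0 : 0 ≤ γ) (hγ1 : γ < 1) :
    ∃ V : S → ℝ, ∀ s, V s = Finset.univ.sup' Finset.univ_nonempty (QofV P r γ V s) := by
  set f : (S → ℝ) → (S → ℝ) :=
    fun V s => Finset.univ.sup' Finset.univ_nonempty (QofV P r γ V s) with hf
  have hL : LipschitzWith ⟨γ, hγ0⟩ f := by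
    apply LipschitzWith.of_dist_le_mul
    intro V W
    have hc : (0:ℝ) ≤ γ * dist V W := mul_nonneg hγ0 dist_nonneg
    show dist (f V) (f W) ≤ γ * dist V W
    rw [dist_pi_le_iff hc]
    intro s
    rw [Real.dist_eq]
    apply abs_sup'_sub_sup'_le
    intro a _
    have key : QofV P r γ V s a - QofV P r γ W s a
        = γ * ∑ s', P s a s' * (V s' - W s') := by
      unfold QofV
      rw [Finset.mul_sum, Finset.mul_sum, Finset.mul_sum]
      rw [show ∀ x y z : ℝ, x + y - (x + z) = y - z from fun x y z => by ring]
      rw [← Finset.sum_sub_distrib]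
      apply Finset.sum_congr rfl; intro s' _; ring
    rw [key, abs_mul, abs_of_nonneg hγ0]
    apply mul_le_mul_of_nonneg_left _ hγ0
    calc |∑ s', P s a s' * (V s' - W s')| ≤ ∑ s', |P s a s' * (V s' - W s')| :=
          Finset.abs_sum_le_sum_abs _ _
      _ ≤ ∑ s', P s a s' * dist V W := by
          apply Finset.sum_le_sum; intro s' _
          rw [abs_mul, abs_of_nonneg ((hP s a).1 s')]
          apply mul_le_mul_of_nonneg_left _ ((hP s a).1 s')
          rw [← Real.dist_eq]
          exact dist_le_pi_dist V W s'
      _ = dist V W := by rw [← Finset.sum_mul, (hP s a).2, one_mul]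
  have hC : ContractingWith ⟨γ, hγ0⟩ f := ⟨by exact_mod_cast hγ1, hL⟩
  refine ⟨ContractingWith.fixedPoint f hC, fun s => ?_⟩
  conv_lhs => rw [← ContractingWith.fixedPoint_isFixedPt hC]

lemma convex_le_sup' (hπ : IsPolicy π) (s : S) (Q : A → ℝ) :
    (∑ a, π s a * Q a) ≤ Finset.univ.sup' Finset.univ_nonempty Q := by
  calc (∑ a, π s a * Q a)
      ≤ ∑ a, π s a * Finset.univ.sup' Finset.univ_nonempty Q := by
        apply Finset.sum_le_sum; intro a _
        exact mul_le_mul_of_nonneg_left (Finset.le_sup' Q (Finset.mem_univ a)) ((hπ s).1 a)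
    _ = Finset.univ.sup' Finset.univ_nonempty Q := by
        rw [← Finset.sum_mul, (hπ s).2, one_mul]

lemma vf_le_fixed (hP : IsKernel P) (hγ0 : 0 ≤ γ) (hγ1 : γ < 1)
    {V : S → ℝ} (hV : ∀ s, V s = Finset.univ.sup' Finset.univ_nonempty (QofV P r γ V s))
    (hπ : IsPolicy π) (s : S) : vf P π r γ s ≤ V s := by
  set D : S → ℝ := fun s => vf P π r γ s - V s with hD
  set M : ℝ := Finset.univ.sup' Finset.univ_nonempty D with hM
  have hle : ∀ s, D s ≤ M := fun s => Finset.le_sup' D (Finset.mem_univ s)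
  have key : ∀ u, D u ≤ γ * M := by
    intro u
    have hb := vf_bellman (r := r) hP hπ hγ0 hγ1 u
    have h1 : ∀ a : A, (∑ s', P u a s' * vf P π r γ s') ≤ (∑ s', P u a s' * V s') + M := by
      intro a
      calc (∑ s', P u a s' * vf P π r γ s') ≤ ∑ s', P u a s' * (V s' + M) := by
            apply Finset.sum_le_sum; intro s' _
            apply mul_le_mul_of_nonneg_left _ ((hP u a).1 s')
            have h := hle s'; simp only [hD] at h; linarith
        _ = (∑ s', (P u a s' * V s' + P u a s' * M)) :=
            Finset.sum_congr rfl fun s' _ => by ring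
        _ = (∑ s', P u a s' * V s') + (∑ s', P u a s') * M := by
            rw [Finset.sum_add_distrib, Finset.sum_mul]
        _ = (∑ s', P u a s' * V s') + M := by rw [(hP u a).2, one_mul]
    have h2 : vf P π r γ u ≤ (∑ a, π u a * QofV P r γ V u a) + γ * M := by
      rw [hb]
      calc (∑ a, π u a * (r u a + γ * ∑ s', P u a s' * vf P π r γ s'))
          ≤ ∑ a, π u a * (QofV P r γ V u a + γ * M) := by
            apply Finset.sum_le_sum; intro a _
            apply mul_le_mul_of_nonneg_left _ ((hπ u).1 a)
            unfold QofV
            have := h1 a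
            have hg : γ * (∑ s', P u a s' * vf P π r γ s')
                ≤ γ * ((∑ s', P u a s' * V s') + M) := mul_le_mul_of_nonneg_left this hγ0
            linarith [hg]
        _ = (∑ a, (π u a * QofV P r γ V u a + π u a * (γ * M))) :=
            Finset.sum_congr rfl fun a _ => by ring
        _ = (∑ a, π u a * QofV P r γ V u a) + (∑ a, π u a) * (γ * M) := by
            rw [Finset.sum_add_distrib, Finset.sum_mul]
        _ = (∑ a, π u a * QofV P r γ V u a) + γ * M := by rw [(hπ u).2, one_mul]
    have h3 : (∑ a, π u a * QofV P r γ V u a) ≤ V u := by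
      rw [hV u]; exact convex_le_sup' hπ u _
    simp only [hD]; linarith
  obtain ⟨s0, _, hs0⟩ := Finset.exists_mem_eq_sup' (Finset.univ_nonempty (α := S)) D
  have hMle : M ≤ γ * M := by
    calc M = D s0 := hs0
      _ ≤ γ * M := key s0
  have hM0 : M ≤ 0 := by nlinarith
  have := hle s
  simp only [hD] at this
  linarith

lemma fixed_le_vf (hP : IsKernel P) (hγ0 : 0 ≤ γ) (hγ1 : γ < 1)
    {V : S → ℝ} (hπ : IsPolicy π)
    (hcons : ∀ s, (∑ a, π s a * QofV P r γ V s a) = V s) (s : S) :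
    V s ≤ vf P π r γ s := by
  set D : S → ℝ := fun s => V s - vf P π r γ s with hD
  set M : ℝ := Finset.univ.sup' Finset.univ_nonempty D with hM
  have hle : ∀ s, D s ≤ M := fun s => Finset.le_sup' D (Finset.mem_univ s)
  have key : ∀ u, D u ≤ γ * M := by
    intro u
    have hb := vf_bellman (r := r) hP hπ hγ0 hγ1 u
    have heq : V u - vf P π r γ u
        = ∑ a, π u a * (γ * ∑ s', P u a s' * (V s' - vf P π r γ s')) := by
      rw [hb, ← hcons u, ← Finset.sum_sub_distrib]
      apply Finset.sum_congr rfl; intro a _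
      have hsub : (∑ s', P u a s' * (V s' - vf P π r γ s'))
          = (∑ s', P u a s' * V s') - (∑ s', P u a s' * vf P π r γ s') := by
        rw [← Finset.sum_sub_distrib]
        exact Finset.sum_congr rfl fun s' _ => by ring
      rw [hsub]; unfold QofV; ring
    have hbound : ∀ a : A, (∑ s', P u a s' * (V s' - vf P π r γ s')) ≤ M := by
      intro a
      calc (∑ s', P u a s' * (V s' - vf P π r γ s')) ≤ ∑ s', P u a s' * M := by
            apply Finset.sum_le_sum; intro s' _
            apply mul_le_mul_of_nonneg_left _ ((hP u a).1 s')
            have h := hle s'; simp only [hD] at h; exact h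
        _ = M := by rw [← Finset.sum_mul, (hP u a).2, one_mul]
    have : D u = ∑ a, π u a * (γ * ∑ s', P u a s' * (V s' - vf P π r γ s')) := heq
    rw [this]
    calc (∑ a, π u a * (γ * ∑ s', P u a s' * (V s' - vf P π r γ s')))
        ≤ ∑ a, π u a * (γ * M) := by
          apply Finset.sum_le_sum; intro a _
          exact mul_le_mul_of_nonneg_left
            (mul_le_mul_of_nonneg_left (hbound a) hγ0) ((hπ u).1 a)
      _ = γ * M := by rw [← Finset.sum_mul, (hπ u).2, one_mul]
  obtain ⟨s0, _, hs0⟩ := Finset.exists_mem_eq_sup' (Finset.univ_nonempty (α := S)) D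
  have hMle : M ≤ γ * M := by
    calc M = D s0 := hs0
      _ ≤ γ * M := key s0
  have hM0 : M ≤ 0 := by nlinarith
  have := hle s
  simp only [hD] at this
  linarith

end Lemmas5
section Lemmas6
set_option linter.unusedSectionVars false
variable {S A : Type*} [Fintype S] [Fintype A] [Nonempty A]

lemma isKernel_Ptil {P : S → A → S → ℝ} (hP : IsKernel P) (I : Set (S × A)) :
    IsKernel (Ptil P I) := by
  intro s? a
  match s? with
  | none =>
      constructor
      · intro s'?
        have h : Ptil P I none a s'? = if s'? = none then 1 else 0 := rfl
        rw [h]; split <;> norm_num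
      · show (∑ s'? : Option S, if s'? = none then (1:ℝ) else 0) = 1
        rw [Fintype.sum_option]; simp
  | some s =>
      by_cases hI : (s, a) ∈ I
      · constructor
        · intro s'?; simp only [Ptil, if_pos hI]; split <;> norm_num
        · show (∑ s'? : Option S, Ptil P I (some s) a s'?) = 1
          have : ∀ s'?, Ptil P I (some s) a s'? = if s'? = none then (1:ℝ) else 0 := by
            intro s'?; simp [Ptil, hI]
          rw [Finset.sum_congr rfl fun x _ => this x, Fintype.sum_option]; simp
      · constructor
        · intro s'?
          match s'? with
          | none => simp [Ptil, hI]
          | some s' => simpa [Ptil, hI] using (hP s a).1 s'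
        · show (∑ s'? : Option S, Ptil P I (some s) a s'?) = 1
          rw [Fintype.sum_option]
          have h1 : Ptil P I (some s) a none = 0 := by simp [Ptil, hI]
          have h2 : ∀ s' : S, Ptil P I (some s) a (some s') = P s a s' := by
            intro s'; simp [Ptil, hI]
          rw [h1, Finset.sum_congr rfl fun s' _ => h2 s', zero_add, (hP s a).2]

lemma isPolicy_extPol {π : S → A → ℝ} (hπ : IsPolicy π) : IsPolicy (extPol π) := by
  intro s?
  match s? with
  | none =>
      constructor
      · intro a; show (0:ℝ) ≤ (Fintype.card A : ℝ)⁻¹; positivity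
      · show (∑ _a : A, (Fintype.card A : ℝ)⁻¹) = 1
        rw [Finset.sum_const, Finset.card_univ, nsmul_eq_mul]
        rw [mul_inv_cancel₀]
        exact_mod_cast Fintype.card_ne_zero
  | some s => exact hπ s

lemma isDist_extDist {d0 : S → ℝ} (hd : IsDist d0) : IsDist (extDist d0) := by
  constructor
  · intro s?; match s? with
    | none => exact le_refl 0
    | some s => exact hd.1 s
  · show (∑ s? : Option S, extDist d0 s?) = 1
    rw [Fintype.sum_option]
    show (0:ℝ) + ∑ s, d0 s = 1
    rw [zero_add, hd.2]

lemma fixed_nonneg {P : S → A → S → ℝ} {r : S → A → ℝ} {γ : ℝ} [Nonempty S]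
    (hP : IsKernel P) (hγ0 : 0 ≤ γ) (hγ1 : γ < 1) (hr : ∀ s a, 0 ≤ r s a)
    {V : S → ℝ} (hV : ∀ s, V s = Finset.univ.sup' Finset.univ_nonempty (QofV P r γ V s))
    (s : S) : 0 ≤ V s := by
  set D : S → ℝ := fun s => -V s with hD
  set m : ℝ := Finset.univ.sup' Finset.univ_nonempty D with hm
  have hle : ∀ s, D s ≤ m := fun s => Finset.le_sup' D (Finset.mem_univ s)
  have key : ∀ u, D u ≤ γ * m := by
    intro u
    obtain ⟨a⟩ := (inferInstance : Nonempty A)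
    have h1 : QofV P r γ V u a ≤ V u := by
      rw [hV u]; exact Finset.le_sup' _ (Finset.mem_univ a)
    have h2 : -m ≤ ∑ s', P u a s' * V s' := by
      calc -m = ∑ s', P u a s' * (-m) := by
            rw [← Finset.sum_mul, (hP u a).2, one_mul]
        _ ≤ ∑ s', P u a s' * V s' := by
            apply Finset.sum_le_sum; intro s' _
            apply mul_le_mul_of_nonneg_left _ ((hP u a).1 s')
            have h := hle s'; simp only [hD] at h; linarith
    have h3 : γ * (-m) ≤ γ * ∑ s', P u a s' * V s' := mul_le_mul_of_nonneg_left h2 hγ0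
    have h4 := hr u a
    simp only [hD]
    unfold QofV at h1
    linarith
  obtain ⟨s0, _, hs0⟩ := Finset.exists_mem_eq_sup' (Finset.univ_nonempty (α := S)) D
  have hMle : m ≤ γ * m := by
    calc m = D s0 := hs0
      _ ≤ γ * m := key s0
  have hM0 : m ≤ 0 := by nlinarith
  have := hle s
  simp only [hD] at this
  linarith

end Lemmas6

/-- (1) `Ṽ*(d₀) ≥ J̃^π_+` for every policy `π`; (2) some optimal policy of `M̃`
never visits `I`; (3) if `R̃ < 0`, every optimal policy of `M̃` never visits `I`. -/
theorem stmt_15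
    (P : S → A → S → ℝ) (r : S → A → ℝ) (γ : ℝ) (sbad sabs : S) (d0 : S → ℝ)
    (I : Set (S × A)) (Rt : ℝ)
    (hP : IsKernel P) (hγ0 : 0 ≤ γ) (hγ1 : γ < 1)
    (hr : ∀ s a, 0 ≤ r s a ∧ r s a ≤ 1)
    (hne : sbad ≠ sabs)
    (hPbad : ∀ a, P sbad a = pureDist sabs)
    (hPabs : ∀ a, P sabs a = pureDist sabs)
    (hrbad : ∀ a : A, r sbad a = 0) (hrabs : ∀ a : A, r sabs a = 0)
    (hd0 : IsDist d0)
    (hI : ∀ p ∈ I, p.1 ≠ sbad ∧ p.1 ≠ sabs)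
    (hpartial : ∀ p ∈ I, ∃ a' : A, (p.1, a') ∉ I)
    (hRt : Rt ≤ 0) :
    (∀ π, IsPolicy π →
        (1 / (1 - γ)) * (∑ s, ∑ a,
            dsa (Ptil P I) (extPol π) γ (extDist d0) (some s) a *
              (if s ≠ sbad ∧ s ≠ sabs ∧ (s, a) ∉ I then r s a else 0))
          ≤ ⨆ p : {π' : S → A → ℝ // IsPolicy π'},
              value (Ptil P I) (extPol p.1) (rtil r I Rt) γ (extDist d0))
    ∧ (∃ πo, IsPolicy πo ∧
        (∀ π', IsPolicy π' →
          value (Ptil P I) (extPol π') (rtil r I Rt) γ (extDist d0)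
            ≤ value (Ptil P I) (extPol πo) (rtil r I Rt) γ (extDist d0)) ∧
        (∑ s, ∑ a,
          if (s, a) ∈ I then dsa (Ptil P I) (extPol πo) γ (extDist d0) (some s) a
          else 0) = 0)
    ∧ (Rt < 0 → ∀ πo, IsPolicy πo →
        (∀ π', IsPolicy π' →
          value (Ptil P I) (extPol π') (rtil r I Rt) γ (extDist d0)
            ≤ value (Ptil P I) (extPol πo) (rtil r I Rt) γ (extDist d0)) →
        (∑ s, ∑ a,
          if (s, a) ∈ I then dsa (Ptil P I) (extPol πo) γ (extDist d0) (some s) a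
          else 0) = 0) := by
  classical
  have hγne : (1:ℝ) - γ ≠ 0 := by linarith
  set P' : Option S → A → Option S → ℝ := Ptil P I with hP'def
  set r0 : Option S → A → ℝ := rtil r I 0 with hr0def
  set rR : Option S → A → ℝ := rtil r I Rt with hrRdef
  set d0' : Option S → ℝ := extDist d0 with hd0'def
  have hP' : IsKernel P' := isKernel_Ptil hP I
  have hd0' : IsDist d0' := isDist_extDist hd0
  -- reward computations
  have hr0none : ∀ a, r0 none a = 0 := fun a => rfl
  have hrRnone : ∀ a, rR none a = 0 := fun a => rfl
  have hr0some : ∀ s a, r0 (some s) a = if (s, a) ∈ I then 0 else r s a := fun s a => rfl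
  have hrRsome : ∀ s a, rR (some s) a = if (s, a) ∈ I then Rt else r s a := fun s a => rfl
  have hr0nn : ∀ s? a, 0 ≤ r0 s? a := by
    intro s? a
    match s? with
    | none => exact le_refl 0
    | some s =>
        rw [hr0some]
        split
        · exact le_refl 0
        · exact (hr s a).1
  have hr0abs : ∀ s? a, |r0 s? a| ≤ 1 := by
    intro s? a
    match s? with
    | none => rw [hr0none]; norm_num
    | some s =>
        rw [hr0some]; split
        · norm_num
        · rw [abs_of_nonneg (hr s a).1]; exact (hr s a).2
  set C : ℝ := max 1 (-Rt) with hCdef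
  have hC1 : (1:ℝ) ≤ C := le_max_left _ _
  have hC0 : (0:ℝ) ≤ C := by linarith
  have hrRabs : ∀ s? a, |rR s? a| ≤ C := by
    intro s? a
    match s? with
    | none => rw [hrRnone]; simpa using hC0
    | some s =>
        rw [hrRsome]; split
        · rw [abs_of_nonpos hRt]; exact le_max_right _ _
        · rw [abs_of_nonneg (hr s a).1]; exact le_trans (hr s a).2 hC1
  -- X
  set X : (S → A → ℝ) → ℝ := fun π => ∑ s, ∑ a,
    if (s, a) ∈ I then dsa P' (extPol π) γ d0' (some s) a else 0 with hXdef
  have hXnn : ∀ π, IsPolicy π → 0 ≤ X π := by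
    intro π hπ
    apply Finset.sum_nonneg; intro s _
    apply Finset.sum_nonneg; intro a _
    split
    · exact dsa_nonneg hP' (isPolicy_extPol hπ) hd0' hγ0 hγ1 _ _
    · exact le_refl 0
  -- Claim A
  have claimA : ∀ π, IsPolicy π →
      value P' (extPol π) rR γ d0'
        = value P' (extPol π) r0 γ d0' + (1 - γ)⁻¹ * (Rt * X π) := by
    intro π hπ
    have hπ' := isPolicy_extPol hπ
    have keyR : (∑ s? : Option S, ∑ a, dsa P' (extPol π) γ d0' s? a * rR s? a)
        = (∑ s? : Option S, ∑ a, dsa P' (extPol π) γ d0' s? a * r0 s? a) + Rt * X π := by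
      rw [Fintype.sum_option, Fintype.sum_option]
      have hnone : ∀ a, dsa P' (extPol π) γ d0' none a * rR none a
          = dsa P' (extPol π) γ d0' none a * r0 none a := by
        intro a; rw [hrRnone, hr0none]
      rw [Finset.sum_congr rfl fun a _ => hnone a]
      have hsome : (∑ s, ∑ a, dsa P' (extPol π) γ d0' (some s) a * rR (some s) a)
          = (∑ s, ∑ a, (dsa P' (extPol π) γ d0' (some s) a * r0 (some s) a
              + Rt * (if (s, a) ∈ I then dsa P' (extPol π) γ d0' (some s) a else 0))) := by
        apply Finset.sum_congr rfl; intro s _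
        apply Finset.sum_congr rfl; intro a _
        by_cases h : (s, a) ∈ I
        · rw [hrRsome, hr0some, if_pos h, if_pos h, if_pos h]; ring
        · rw [hrRsome, hr0some, if_neg h, if_neg h, if_neg h]; ring
      rw [hsome]
      have : (∑ s, ∑ a, (dsa P' (extPol π) γ d0' (some s) a * r0 (some s) a
              + Rt * (if (s, a) ∈ I then dsa P' (extPol π) γ d0' (some s) a else 0)))
          = (∑ s, ∑ a, dsa P' (extPol π) γ d0' (some s) a * r0 (some s) a)
            + Rt * X π := by
        rw [hXdef, Finset.mul_sum, ← Finset.sum_add_distrib]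
        apply Finset.sum_congr rfl; intro s _
        rw [Finset.mul_sum, ← Finset.sum_add_distrib]
      rw [this]; ring
    rw [value_eq_dsa hP' hπ' hd0' hγ0 hγ1, value_eq_dsa hP' hπ' hd0' hγ0 hγ1, keyR]
    ring
  -- Claim B
  have claimB : ∀ π, IsPolicy π →
      value P' (extPol π) r0 γ d0'
        = (1 - γ)⁻¹ * ∑ s, ∑ a, dsa P' (extPol π) γ d0' (some s) a *
            (if s ≠ sbad ∧ s ≠ sabs ∧ (s, a) ∉ I then r s a else 0) := by
    intro π hπ
    have hπ' := isPolicy_extPol hπ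
    rw [value_eq_dsa hP' hπ' hd0' hγ0 hγ1]
    congr 1
    rw [Fintype.sum_option]
    have hnone : (∑ a, dsa P' (extPol π) γ d0' none a * r0 none a) = 0 := by
      apply Finset.sum_eq_zero; intro a _; rw [hr0none, mul_zero]
    rw [hnone, zero_add]
    apply Finset.sum_congr rfl; intro s _
    apply Finset.sum_congr rfl; intro a _
    congr 1
    rw [hr0some]
    by_cases h : (s, a) ∈ I
    · rw [if_pos h, if_neg (by tauto)]
    · rw [if_neg h]
      by_cases hb : s = sbad
      · rw [if_neg (by tauto), hb, hrbad]
      · by_cases ha : s = sabs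
        · rw [if_neg (by tauto), ha, hrabs]
        · rw [if_pos ⟨hb, ha, h⟩]
  -- optimal value function
  obtain ⟨V, hV⟩ := exists_fixed (P := P') (r := r0) hP' hγ0 hγ1
  have hVnn : ∀ s?, 0 ≤ V s? := fixed_nonneg hP' hγ0 hγ1 hr0nn hV
  have hPnone : ∀ (a : A) (W : Option S → ℝ),
      (∑ s'? : Option S, P' none a s'? * W s'?) = W none := by
    intro a W
    have h1 : ∀ s'?, P' none a s'? * W s'? = (if s'? = none then 1 else 0) * W s'? :=
      fun s'? => rfl
    rw [Finset.sum_congr rfl fun x _ => h1 x, Fintype.sum_option]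
    simp
  have hQnone : ∀ a, QofV P' r0 γ V none a = γ * V none := by
    intro a
    unfold QofV
    rw [hr0none, hPnone a V, zero_add]
  have hVnone : V none = 0 := by
    obtain ⟨a0⟩ := (inferInstance : Nonempty A)
    have hsup : Finset.univ.sup' Finset.univ_nonempty (QofV P' r0 γ V none)
        = γ * V none := by
      apply le_antisymm
      · exact Finset.sup'_le _ _ fun a _ => (hQnone a).le
      · rw [← hQnone a0]; exact Finset.le_sup' _ (Finset.mem_univ a0)
    have h := hV none
    rw [hsup] at h
    have h2 : (1 - γ) * V none = 0 := by linarith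
    rcases mul_eq_zero.mp h2 with h3 | h3
    · exact absurd h3 hγne
    · exact h3
  have hQsomeI : ∀ s a, (s, a) ∈ I → QofV P' r0 γ V (some s) a = 0 := by
    intro s a h
    unfold QofV
    have hr00 : r0 (some s) a = 0 := by rw [hr0some, if_pos h]
    have hPs : ∀ s'?, P' (some s) a s'? = if s'? = none then 1 else 0 := by
      intro s'?; simp [hP'def, Ptil, h]
    have hsum : (∑ s'? : Option S, P' (some s) a s'? * V s'?) = V none := by
      rw [Finset.sum_congr rfl fun x _ => by rw [hPs x], Fintype.sum_option]; simp
    rw [hr00, hsum, hVnone, mul_zero, zero_add]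
  have hQnn : ∀ s? a, 0 ≤ QofV P' r0 γ V s? a := by
    intro s? a; unfold QofV
    have h1 := hr0nn s? a
    have h2 : (0:ℝ) ≤ ∑ s'?, P' s? a s'? * V s'? :=
      Finset.sum_nonneg fun x _ => mul_nonneg ((hP' s? a).1 x) (hVnn x)
    have h3 := mul_nonneg hγ0 h2
    linarith
  have hgex : ∀ s : S, ∃ a : A, (s, a) ∉ I ∧
      ∀ a', QofV P' r0 γ V (some s) a' ≤ QofV P' r0 γ V (some s) a := by
    intro s
    set T : Finset A := Finset.univ.filter (fun a => (s, a) ∉ I) with hT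
    have hTne : T.Nonempty := by
      by_cases hex : ∃ a0, (s, a0) ∈ I
      · obtain ⟨a0, ha0⟩ := hex
        obtain ⟨a1, ha1⟩ := hpartial (s, a0) ha0
        exact ⟨a1, by simp only [hT, Finset.mem_filter, Finset.mem_univ, true_and]; exact ha1⟩
      · obtain ⟨a0⟩ := (inferInstance : Nonempty A)
        refine ⟨a0, ?_⟩
        simp only [hT, Finset.mem_filter, Finset.mem_univ, true_and]
        exact fun h => hex ⟨a0, h⟩
    obtain ⟨astar, haT, hmax⟩ :=
      Finset.exists_max_image T (fun a => QofV P' r0 γ V (some s) a) hTne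
    have hanotI : (s, astar) ∉ I := by
      have := Finset.mem_filter.mp haT
      exact this.2
    refine ⟨astar, hanotI, fun a' => ?_⟩
    by_cases h : (s, a') ∈ I
    · rw [hQsomeI s a' h]; exact hQnn _ _
    · exact hmax a' (Finset.mem_filter.mpr ⟨Finset.mem_univ _, h⟩)
  choose g hgI hgmax using hgex
  set πo : S → A → ℝ := fun s a => if a = g s then 1 else 0 with hπodef
  have hπo : IsPolicy πo := by
    intro s
    refine ⟨fun a => ?_, ?_⟩
    · show (0:ℝ) ≤ if a = g s then 1 else 0
      split <;> norm_num
    · show (∑ a, if a = g s then (1:ℝ) else 0) = 1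
      simp
  have hQg : ∀ s, QofV P' r0 γ V (some s) (g s)
      = Finset.univ.sup' Finset.univ_nonempty (QofV P' r0 γ V (some s)) := by
    intro s
    apply le_antisymm (Finset.le_sup' _ (Finset.mem_univ _))
    exact Finset.sup'_le _ _ fun a _ => hgmax s a
  have hcons : ∀ s?, (∑ a, extPol πo s? a * QofV P' r0 γ V s? a) = V s? := by
    intro s?
    match s? with
    | some s =>
        have hext : ∀ a, extPol πo (some s) a = if a = g s then 1 else 0 := fun a => rfl
        have hsum : (∑ a, extPol πo (some s) a * QofV P' r0 γ V (some s) a)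
            = QofV P' r0 γ V (some s) (g s) := by
          rw [Finset.sum_eq_single (g s)]
          · rw [hext, if_pos rfl, one_mul]
          · intro b _ hb; rw [hext, if_neg hb, zero_mul]
          · intro h; exact absurd (Finset.mem_univ _) h
        rw [hsum, hQg s, ← hV]
    | none =>
        have hterm : ∀ a : A, extPol πo none a * QofV P' r0 γ V none a = 0 := by
          intro a; rw [hQnone a, hVnone, mul_zero, mul_zero]
        rw [Finset.sum_congr rfl fun a _ => hterm a, hVnone]
        simp
  have hπo' := isPolicy_extPol hπo
  have hvf : ∀ s?, vf P' (extPol πo) r0 γ s? = V s? := fun s? =>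
    le_antisymm (vf_le_fixed hP' hγ0 hγ1 hV hπo' s?)
      (fixed_le_vf hP' hγ0 hγ1 hπo' hcons s?)
  have hopt0 : ∀ π, IsPolicy π →
      value P' (extPol π) r0 γ d0' ≤ value P' (extPol πo) r0 γ d0' := by
    intro π hπ
    rw [value_linear hP' (isPolicy_extPol hπ) hγ0 hγ1,
      value_linear hP' hπo' hγ0 hγ1]
    apply Finset.sum_le_sum; intro s? _
    apply mul_le_mul_of_nonneg_left _ (hd0'.1 s?)
    rw [hvf s?]
    exact vf_le_fixed hP' hγ0 hγ1 hV (isPolicy_extPol hπ) s?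
  have hXo : X πo = 0 := by
    apply Finset.sum_eq_zero; intro s _
    apply Finset.sum_eq_zero; intro a _
    split
    · next h =>
        have hne' : a ≠ g s := by
          intro he; rw [he] at h; exact hgI s h
        apply dsa_eq_zero hγ1
        show (if a = g s then (1:ℝ) else 0) = 0
        rw [if_neg hne']
    · rfl
  have hvalRo : value P' (extPol πo) rR γ d0' = value P' (extPol πo) r0 γ d0' := by
    rw [claimA πo hπo, hXo, mul_zero, mul_zero, add_zero]
  have hbdd : BddAbove (Set.range fun p : {π' : S → A → ℝ // IsPolicy π'} =>
      value P' (extPol p.1) rR γ d0') := by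
    refine ⟨C * (1 - γ)⁻¹, ?_⟩
    rintro x ⟨p, rfl⟩
    exact value_le hP' (isPolicy_extPol p.2) hd0' hγ0 hγ1 hC0 hrRabs
  have hpenalty : ∀ π, IsPolicy π → (1 - γ)⁻¹ * (Rt * X π) ≤ 0 := by
    intro π hπ
    have h1 : Rt * X π ≤ 0 := mul_nonpos_of_nonpos_of_nonneg hRt (hXnn π hπ)
    have h2 : (0:ℝ) ≤ (1 - γ)⁻¹ := inv_nonneg.mpr (by linarith)
    exact mul_nonpos_of_nonneg_of_nonpos h2 h1
  refine ⟨?_, ?_, ?_⟩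
  · intro π hπ
    rw [one_div, ← claimB π hπ]
    calc value P' (extPol π) r0 γ d0'
        ≤ value P' (extPol πo) r0 γ d0' := hopt0 π hπ
      _ = value P' (extPol πo) rR γ d0' := hvalRo.symm
      _ ≤ ⨆ p : {π' : S → A → ℝ // IsPolicy π'},
            value P' (extPol p.1) rR γ d0' := le_ciSup hbdd ⟨πo, hπo⟩
  · refine ⟨πo, hπo, fun π' hπ' => ?_, hXo⟩
    calc value P' (extPol π') rR γ d0'
        = value P' (extPol π') r0 γ d0' + (1 - γ)⁻¹ * (Rt * X π') := claimA π' hπ'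
      _ ≤ value P' (extPol π') r0 γ d0' := by linarith [hpenalty π' hπ']
      _ ≤ value P' (extPol πo) r0 γ d0' := hopt0 π' hπ'
      _ = value P' (extPol πo) rR γ d0' := hvalRo.symm
  · intro hRtneg πo2 hπo2 hopt2
    have h1 : value P' (extPol πo) rR γ d0' ≤ value P' (extPol πo2) rR γ d0' :=
      hopt2 πo hπo
    have h2 : value P' (extPol πo2) r0 γ d0' ≤ value P' (extPol πo) r0 γ d0' :=
      hopt0 πo2 hπo2
    have h3 := claimA πo2 hπo2
    have hinv : (0:ℝ) < (1 - γ)⁻¹ := inv_pos.mpr (by linarith)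
    have h5 : 0 ≤ (1 - γ)⁻¹ * (Rt * X πo2) := by
      rw [hvalRo] at h1
      linarith [h1, h2, h3]
    have h6 : 0 ≤ Rt * X πo2 := nonneg_of_mul_nonneg_right h5 hinv
    have h7 : Rt * X πo2 ≤ 0 :=
      mul_nonpos_of_nonpos_of_nonneg hRtneg.le (hXnn πo2 hπo2)
    rcases mul_eq_zero.mp (le_antisymm h7 h6) with h8 | h8
    · exact absurd h8 (ne_of_lt hRtneg)
    · exact h8


end SafeRL
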